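/- Let k be a field of characteristic p > 0 and suppose u, v ∈ k⟦x,y⟧ satisfy u = x^p(c₀ + f₀ y + x Λ₀) and v = τ₀(y) y^p + e₀ x + x Ω₀ with c₀, f₀, e₀ ∈ k nonzero, τ₀(y) ∈ k⟦y⟧ a unit power series, Λ₀, Ω₀ ∈ k⟦x,y⟧ and Ω₀ with zero constant term. For each integer i with 0 ≤ i < p, let σ_i : k⟦x,y⟧ → k⟦X,Y⟧ be the unique continuous k-algebra homomorphism with σ_i(x) = X·Y^i and σ_i(y) = Y. Then in k⟦X,Y⟧, σ_i(u) does not divide σ_i(v) and σ_i(v) does not divide σ_i(u). (In particular the ideal generated by σ_i(u) and σ_i(v) in k⟦X,Y⟧ is not principal.) -/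

import Mathlib

open MvPowerSeries

/-- The maximal ideal of the two-variable formal power series ring
`k⟦x,y⟧` over a field `k`: the series with zero constant term. -/
noncomputable def psMaxIdeal (k : Type) [Field k] : Ideal (MvPowerSeries (Fin 2) k) :=
  RingHom.ker (MvPowerSeries.constantCoeff (σ := Fin 2) (R := k))

/-- `σ : k⟦x,y⟧ →+* k⟦X,Y⟧` is the substitution homomorphism `x ↦ a`,
`y ↦ b`: a `k`-algebra homomorphism, continuous for the maximal-adic
topologies, sending the two variables to `a` and `b`.  (Such a continuous
`k`-algebra homomorphism is unique when it exists, namely when `a` and `b`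
have zero constant term.) -/
def IsSubstitutionHom (k : Type) [Field k]
    (σ : MvPowerSeries (Fin 2) k →+* MvPowerSeries (Fin 2) k)
    (a b : MvPowerSeries (Fin 2) k) : Prop :=
  (∀ c : k, σ (MvPowerSeries.C (σ := Fin 2) (R := k) c) = MvPowerSeries.C (σ := Fin 2) (R := k) c) ∧
  σ (MvPowerSeries.X 0) = a ∧ σ (MvPowerSeries.X 1) = b ∧
  ∀ n : ℕ, ∃ m : ℕ, ∀ F ∈ (psMaxIdeal k) ^ m, σ F ∈ (psMaxIdeal k) ^ n

/-- `ε : k⟦T⟧ →+* k⟦X,Y⟧` is the substitution homomorphism `T ↦ w`: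
a `k`-algebra homomorphism, continuous for the maximal-adic topologies,
sending `T` to `w`. -/
def IsSubstitutionHom₁ (k : Type) [Field k]
    (ε : PowerSeries k →+* MvPowerSeries (Fin 2) k)
    (w : MvPowerSeries (Fin 2) k) : Prop :=
  (∀ c : k, ε (PowerSeries.C (R := k) c) = MvPowerSeries.C (σ := Fin 2) (R := k) c) ∧
  ε PowerSeries.X = w ∧
  ∀ n : ℕ, ∃ m : ℕ,
    ∀ F ∈ (RingHom.ker (PowerSeries.constantCoeff (R := k))) ^ m, ε F ∈ (psMaxIdeal k) ^ n

section A2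
variable {k : Type} [Field k]


variable {k : Type} [Field k]

lemma fin2_cases (x : Fin 2) : x = 0 ∨ x = 1 := by
  fin_cases x <;> simp

lemma fs_ext {d e : Fin 2 →₀ ℕ} (h0 : d 0 = e 0) (h1 : d 1 = e 1) : d = e := by
  ext x; rcases fin2_cases x with rfl | rfl <;> assumption

lemma fin2_mem (s t x : Fin 2) (hst : s ≠ t) : x = s ∨ x = t := by
  rcases fin2_cases x with rfl | rfl <;> rcases fin2_cases s with rfl | rfl <;>
    rcases fin2_cases t with rfl | rfl <;> simp_all

lemma fs_eq_single {s t : Fin 2} (hst : s ≠ t) (d : Fin 2 →₀ ℕ) (h : d s = 0) :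
    d = Finsupp.single t (d t) := by
  ext x
  rcases fin2_mem s t x hst with rfl | rfl
  · rw [h, Finsupp.single_apply, if_neg (Ne.symm hst)]
  · rw [Finsupp.single_apply, if_pos rfl]

lemma mem_psMaxIdeal {F : MvPowerSeries (Fin 2) k} :
    F ∈ psMaxIdeal k ↔ MvPowerSeries.constantCoeff (σ := Fin 2) (R := k) F = 0 :=
  RingHom.mem_ker

lemma coeff_eq_zero_of_mem_pow :
    ∀ (n : ℕ) (F : MvPowerSeries (Fin 2) k), F ∈ psMaxIdeal k ^ n →
      ∀ d : Fin 2 →₀ ℕ, d 0 + d 1 < n → MvPowerSeries.coeff (R := k) d F = 0 := by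
  intro n
  induction n with
  | zero => intro F _ d hd; omega
  | succ n ih =>
    intro F hF
    rw [pow_succ] at hF
    refine Submodule.mul_induction_on hF ?_ ?_
    · intro f hf g hg d hd
      classical
      rw [MvPowerSeries.coeff_mul]
      apply Finset.sum_eq_zero
      rintro ⟨d1, d2⟩ hmem
      rw [Finset.HasAntidiagonal.mem_antidiagonal] at hmem
      by_cases h2 : d2 = 0
      · subst h2
        have : MvPowerSeries.coeff (R := k) 0 g = 0 := mem_psMaxIdeal.mp hg
        simp [this]
      · have h20 : d1 0 + d2 0 = d 0 := by
          rw [← hmem]; simp [Finsupp.add_apply]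
        have h21 : d1 1 + d2 1 = d 1 := by
          rw [← hmem]; simp [Finsupp.add_apply]
        have hd2pos : 1 ≤ d2 0 + d2 1 := by
          by_contra hcon
          push_neg at hcon
          exact h2 (fs_ext (by simp only [Finsupp.coe_zero, Pi.zero_apply]; omega)
            (by simp only [Finsupp.coe_zero, Pi.zero_apply]; omega))
        have : MvPowerSeries.coeff (R := k) d1 f = 0 := ih f hf d1 (by omega)
        simp [this]
    · intro f g hf hg d hd
      rw [map_add, hf d hd, hg d hd, add_zero]




lemma decomp (F : MvPowerSeries (Fin 2) k)
    (hF : MvPowerSeries.constantCoeff (σ := Fin 2) (R := k) F = 0) :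
    ∃ A B : MvPowerSeries (Fin 2) k,
      F = MvPowerSeries.X 0 * A + MvPowerSeries.X 1 * B ∧
      (∀ d : Fin 2 →₀ ℕ, MvPowerSeries.coeff (R := k) d A
        = MvPowerSeries.coeff (R := k) (d + Finsupp.single 0 1) F) ∧
      (∀ d : Fin 2 →₀ ℕ, d 0 = 0 → MvPowerSeries.coeff (R := k) d B
        = MvPowerSeries.coeff (R := k) (d + Finsupp.single 1 1) F) ∧
      (∀ d : Fin 2 →₀ ℕ, d 0 ≠ 0 → MvPowerSeries.coeff (R := k) d B = 0) := by
  classical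
  set A : MvPowerSeries (Fin 2) k := fun d => F (d + Finsupp.single 0 1) with hA
  set B : MvPowerSeries (Fin 2) k :=
    fun d => if d 0 = 0 then F (d + Finsupp.single 1 1) else 0 with hB
  have cA : ∀ e : Fin 2 →₀ ℕ, MvPowerSeries.coeff (R := k) e A
      = MvPowerSeries.coeff (R := k) (e + Finsupp.single 0 1) F := fun e => rfl
  have cB : ∀ e : Fin 2 →₀ ℕ, MvPowerSeries.coeff (R := k) e B
      = if e 0 = 0 then MvPowerSeries.coeff (R := k) (e + Finsupp.single 1 1) F else 0 :=
    fun e => rfl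
  refine ⟨A, B, ?_, cA, fun d h => by rw [cB, if_pos h], fun d h => by rw [cB, if_neg h]⟩
  ext d
  rw [map_add, MvPowerSeries.X_def, MvPowerSeries.X_def,
    MvPowerSeries.coeff_monomial_mul, MvPowerSeries.coeff_monomial_mul]
  by_cases h0 : d 0 = 0
  · rw [if_neg (by rw [Finsupp.single_le_iff]; omega)]
    by_cases h1 : d 1 = 0
    · have hd : d = 0 := fs_ext (by simpa using h0) (by simpa using h1)
      rw [if_neg (by rw [Finsupp.single_le_iff]; omega), hd]
      simpa using hF
    · have hle : Finsupp.single 1 1 ≤ d := by rw [Finsupp.single_le_iff]; omega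
      rw [if_pos hle, one_mul, cB, if_pos (by rw [Finsupp.tsub_apply]; simp [h0]),
        tsub_add_cancel_of_le hle, zero_add]
  · have hle : Finsupp.single 0 1 ≤ d := by rw [Finsupp.single_le_iff]; omega
    rw [if_pos hle, one_mul, cA, tsub_add_cancel_of_le hle]
    by_cases h2 : Finsupp.single 1 1 ≤ d
    · rw [if_pos h2, one_mul, cB,
        if_neg (by rw [Finsupp.tsub_apply]; simpa [Finsupp.single_apply] using h0), add_zero]
    · rw [if_neg h2, add_zero]


lemma X_mem_psMaxIdeal (s : Fin 2) : (MvPowerSeries.X s : MvPowerSeries (Fin 2) k) ∈ psMaxIdeal k := by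
  rw [mem_psMaxIdeal, MvPowerSeries.constantCoeff_X]

lemma mem_pow_of_coeff_eq_zero :
    ∀ (n : ℕ) (F : MvPowerSeries (Fin 2) k),
      (∀ d : Fin 2 →₀ ℕ, d 0 + d 1 < n → MvPowerSeries.coeff (R := k) d F = 0) →
      F ∈ psMaxIdeal k ^ n := by
  intro n
  induction n with
  | zero => intro F _; simp
  | succ n ih =>
    intro F h
    have h0 : MvPowerSeries.constantCoeff (σ := Fin 2) (R := k) F = 0 := by
      have := h 0 (by simp)
      simpa using this
    obtain ⟨A, B, hFAB, hA, hB, hB'⟩ := decomp F h0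
    have hAm : A ∈ psMaxIdeal k ^ n := by
      refine ih A fun d hd => ?_
      rw [hA]
      refine h _ ?_
      have e1 : (d + Finsupp.single 0 1 : Fin 2 →₀ ℕ) 0 = d 0 + 1 := by simp
      have e2 : (d + Finsupp.single 0 1 : Fin 2 →₀ ℕ) 1 = d 1 := by simp
      omega
    have hBm : B ∈ psMaxIdeal k ^ n := by
      refine ih B fun d hd => ?_
      by_cases hd0 : d 0 = 0
      · rw [hB d hd0]
        refine h _ ?_
        have e1 : (d + Finsupp.single 1 1 : Fin 2 →₀ ℕ) 0 = d 0 := by simp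
        have e2 : (d + Finsupp.single 1 1 : Fin 2 →₀ ℕ) 1 = d 1 + 1 := by simp
        omega
      · exact hB' d hd0
    rw [hFAB, pow_succ']
    exact Ideal.add_mem _ (Ideal.mul_mem_mul (X_mem_psMaxIdeal 0) hAm)
      (Ideal.mul_mem_mul (X_mem_psMaxIdeal 1) hBm)

lemma constCoeff_subst
    (σ : MvPowerSeries (Fin 2) k →+* MvPowerSeries (Fin 2) k)
    (a b : MvPowerSeries (Fin 2) k)
    (hC : ∀ c : k, σ (MvPowerSeries.C (σ := Fin 2) (R := k) c) = MvPowerSeries.C (σ := Fin 2) (R := k) c)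
    (hX0 : σ (MvPowerSeries.X 0) = a) (hX1 : σ (MvPowerSeries.X 1) = b)
    (ha : MvPowerSeries.constantCoeff (σ := Fin 2) (R := k) a = 0)
    (hb : MvPowerSeries.constantCoeff (σ := Fin 2) (R := k) b = 0)
    (F : MvPowerSeries (Fin 2) k) :
    MvPowerSeries.constantCoeff (σ := Fin 2) (R := k) (σ F)
      = MvPowerSeries.constantCoeff (σ := Fin 2) (R := k) F := by
  set c := MvPowerSeries.constantCoeff (σ := Fin 2) (R := k) F with hc
  obtain ⟨A, B, hAB, -, -, -⟩ := decomp (F - MvPowerSeries.C (σ := Fin 2) (R := k) c)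
    (by rw [map_sub, MvPowerSeries.constantCoeff_C, sub_self])
  have hF : F = MvPowerSeries.C (σ := Fin 2) (R := k) c
      + (MvPowerSeries.X 0 * A + MvPowerSeries.X 1 * B) := by
    rw [← hAB]; ring
  rw [hF]
  simp only [map_add, map_mul, hX0, hX1, hC]
  simp [ha, hb]

lemma X_prime (s t : Fin 2) (hst : s ≠ t) :
    Prime (MvPowerSeries.X s : MvPowerSeries (Fin 2) k) := by
  classical
  refine ⟨?_, ?_, ?_⟩
  · intro h0
    have h1 := MvPowerSeries.coeff_index_single_self_X (R := k) s
    rw [h0, map_zero] at h1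
    exact one_ne_zero h1.symm
  · intro hu
    have := MvPowerSeries.isUnit_constantCoeff _ hu
    rw [MvPowerSeries.constantCoeff_X] at this
    exact not_isUnit_zero this
  · intro F G hdvd
    by_contra hcon
    push_neg at hcon
    obtain ⟨hF, hG⟩ := hcon
    rw [MvPowerSeries.X_dvd_iff] at hF hG
    push_neg at hF hG
    obtain ⟨m1, hm1s, hm1⟩ := hF
    obtain ⟨m2, hm2s, hm2⟩ := hG
    have hP1 : ∃ n : ℕ, MvPowerSeries.coeff (R := k) (Finsupp.single t n) F ≠ 0 :=
      ⟨m1 t, by rwa [← fs_eq_single hst m1 hm1s]⟩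
    have hP2 : ∃ n : ℕ, MvPowerSeries.coeff (R := k) (Finsupp.single t n) G ≠ 0 :=
      ⟨m2 t, by rwa [← fs_eq_single hst m2 hm2s]⟩
    set n1 := Nat.find hP1 with hn1
    set n2 := Nat.find hP2 with hn2
    have key : MvPowerSeries.coeff (R := k) (Finsupp.single t (n1 + n2)) (F * G)
        = MvPowerSeries.coeff (R := k) (Finsupp.single t n1) F
          * MvPowerSeries.coeff (R := k) (Finsupp.single t n2) G := by
      rw [MvPowerSeries.coeff_mul]
      refine Finset.sum_eq_single_of_mem (Finsupp.single t n1, Finsupp.single t n2)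
        (by rw [Finset.HasAntidiagonal.mem_antidiagonal, ← Finsupp.single_add]) ?_
      rintro ⟨d1, d2⟩ hmem hne
      rw [Finset.HasAntidiagonal.mem_antidiagonal] at hmem
      have hsplit : d1 s + d2 s = 0 := by
        have := congrArg (fun f : Fin 2 →₀ ℕ => f s) hmem
        simpa [Finsupp.add_apply, Finsupp.single_apply, if_neg (Ne.symm hst)] using this
      have hd1 : d1 = Finsupp.single t (d1 t) := fs_eq_single hst d1 (by omega)
      have hd2 : d2 = Finsupp.single t (d2 t) := fs_eq_single hst d2 (by omega)
      have hsum : d1 t + d2 t = n1 + n2 := by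
        have := congrArg (fun f : Fin 2 →₀ ℕ => f t) hmem
        simpa [Finsupp.add_apply, Finsupp.single_apply] using this
      rcases lt_trichotomy (d1 t) n1 with h | h | h
      · have := Nat.find_min hP1 h
        rw [not_not] at this
        rw [hd1, this, zero_mul]
      · exfalso
        apply hne
        have h2 : d2 t = n2 := by omega
        rw [hd1, hd2, h, h2]
      · have h2 : d2 t < n2 := by omega
        have := Nat.find_min hP2 h2
        rw [not_not] at this
        rw [hd2, this, mul_zero]
    rw [MvPowerSeries.X_dvd_iff] at hdvd
    have := hdvd (Finsupp.single t (n1 + n2))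
      (by rw [Finsupp.single_apply, if_neg (Ne.symm hst)])
    rw [key] at this
    exact (mul_ne_zero (Nat.find_spec hP1) (Nat.find_spec hP2)) this

instance (priority := 100) mvps_domain : IsDomain (MvPowerSeries (Fin 2) k) :=
  NoZeroDivisors.to_isDomain _


end A2

/-- With `u = x^p(c₀ + f₀ y + x Λ₀)` and
`v = τ₀(y) y^p + e₀ x + x Ω₀` as in the hypotheses, for `0 ≤ i < p` and
`σᵢ : k⟦x,y⟧ → k⟦X,Y⟧` the substitution `x ↦ X Y^i`, `y ↦ Y`, neither of
`σᵢ(u)`, `σᵢ(v)` divides the other in `k⟦X,Y⟧`; in particular the ideal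
they generate is not principal. -/
theorem stmt6 (k : Type) [Field k] (p : ℕ) (hp : p.Prime) [CharP k p]
    (u v Λ Ω T : MvPowerSeries (Fin 2) k) (c₀ f₀ e₀ : k)
    (hc : c₀ ≠ 0) (hf : f₀ ≠ 0) (he : e₀ ≠ 0)
    -- `T` is a unit power series in `y` alone (`τ₀(y)`):
    (hTy : ∀ d : Fin 2 →₀ ℕ, d 0 ≠ 0 → MvPowerSeries.coeff (R := k) d T = 0)
    (hTu : MvPowerSeries.constantCoeff (σ := Fin 2) (R := k) T ≠ 0)
    (hΩ : MvPowerSeries.constantCoeff (σ := Fin 2) (R := k) Ω = 0)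
    -- `u = x^p (c₀ + f₀ y + x Λ₀)`:
    (hu : u = (MvPowerSeries.X 0) ^ p *
      (MvPowerSeries.C (σ := Fin 2) (R := k) c₀ + MvPowerSeries.C (σ := Fin 2) (R := k) f₀ * MvPowerSeries.X 1
        + MvPowerSeries.X 0 * Λ))
    -- `v = τ₀(y) y^p + e₀ x + x Ω₀`:
    (hv : v = T * (MvPowerSeries.X 1) ^ p
      + MvPowerSeries.C (σ := Fin 2) (R := k) e₀ * MvPowerSeries.X 0 + MvPowerSeries.X 0 * Ω)
    (i : ℕ) (hip : i < p)
    (σ : MvPowerSeries (Fin 2) k →+* MvPowerSeries (Fin 2) k)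
    (hσ : IsSubstitutionHom k σ (MvPowerSeries.X 0 * MvPowerSeries.X 1 ^ i)
      (MvPowerSeries.X 1)) :
    ¬ (σ u ∣ σ v) ∧ ¬ (σ v ∣ σ u) ∧
    ¬ (Ideal.span {σ u, σ v} : Ideal (MvPowerSeries (Fin 2) k)).IsPrincipal := by
  classical
  obtain ⟨hC, hX0, hX1, -⟩ := hσ
  have hp2 : 2 ≤ p := hp.two_le
  have hXprime : Prime (MvPowerSeries.X 0 : MvPowerSeries (Fin 2) k) :=
    X_prime 0 1 (by decide)
  have hYprime : Prime (MvPowerSeries.X 1 : MvPowerSeries (Fin 2) k) :=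
    X_prime 1 0 (by decide)
  have hcc : ∀ F, MvPowerSeries.constantCoeff (σ := Fin 2) (R := k) (σ F)
      = MvPowerSeries.constantCoeff (σ := Fin 2) (R := k) F :=
    constCoeff_subst σ _ _ hC hX0 hX1 (by simp) (by simp)
  set E := σ (MvPowerSeries.C (σ := Fin 2) (R := k) c₀ + MvPowerSeries.C (σ := Fin 2) (R := k) f₀ * MvPowerSeries.X 1
    + MvPowerSeries.X 0 * Λ) with hEdef
  have hσu : σ u = (MvPowerSeries.X 0) ^ p * (MvPowerSeries.X 1) ^ (i * p) * E := by
    rw [hu, map_mul, map_pow, hX0, mul_pow, ← pow_mul]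
  have hEc : MvPowerSeries.constantCoeff (σ := Fin 2) (R := k) E = c₀ := by
    rw [hEdef, hcc]; simp
  have hEu : IsUnit E :=
    MvPowerSeries.isUnit_iff_constantCoeff.mpr (hEc ▸ (isUnit_iff_ne_zero.mpr hc))
  set D : Fin 2 →₀ ℕ := Finsupp.single 0 1 + Finsupp.single 1 i with hD
  have hD0 : D 0 = 1 := by simp [hD]
  have hD1 : D 1 = i := by simp [hD]
  have hmon : (MvPowerSeries.X 0 : MvPowerSeries (Fin 2) k) * (MvPowerSeries.X 1) ^ i
      = MvPowerSeries.monomial (R := k) D 1 := by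
    rw [MvPowerSeries.X_def, MvPowerSeries.X_pow_eq, MvPowerSeries.monomial_mul_monomial,
      one_mul, hD]
  have hmon2 : MvPowerSeries.C (σ := Fin 2) (R := k) e₀
      * ((MvPowerSeries.X 0 : MvPowerSeries (Fin 2) k) * (MvPowerSeries.X 1) ^ i)
      = MvPowerSeries.monomial (R := k) D e₀ := by
    rw [hmon, ← MvPowerSeries.monomial_zero_eq_C_apply,
      MvPowerSeries.monomial_mul_monomial, zero_add, mul_one]
  have hσv : σ v = σ T * (MvPowerSeries.X 1) ^ p + MvPowerSeries.monomial (R := k) D e₀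
      + MvPowerSeries.monomial (R := k) D 1 * σ Ω := by
    rw [hv]
    simp only [map_add, map_mul, map_pow, hX1, hX0, hC]
    rw [hmon2, hmon]
  have hne1 : Finsupp.single 1 p ≠ D := by
    intro h
    have := congrArg (fun f : Fin 2 →₀ ℕ => f 0) h
    simp only [hD0] at this
    simp at this
  have hne2 : ¬ D ≤ Finsupp.single 1 p := by
    intro h
    have := (Finsupp.le_def.mp h) 0
    rw [hD0] at this
    simp at this
  have hne3 : ¬ Finsupp.single 1 p ≤ D := by
    rw [Finsupp.single_le_iff, hD1]; omega
  have hc1 : MvPowerSeries.coeff (R := k) (Finsupp.single 1 p) (σ v)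
      = MvPowerSeries.constantCoeff (σ := Fin 2) (R := k) T := by
    rw [hσv, map_add, map_add, MvPowerSeries.X_pow_eq, MvPowerSeries.coeff_mul_monomial,
      if_pos le_rfl, tsub_self, mul_one, MvPowerSeries.coeff_monomial, if_neg hne1,
      MvPowerSeries.coeff_monomial_mul, if_neg hne2, add_zero, add_zero,
      MvPowerSeries.coeff_zero_eq_constantCoeff_apply, hcc]
  have hc2 : MvPowerSeries.coeff (R := k) D (σ v) = e₀ := by
    rw [hσv, map_add, map_add, MvPowerSeries.X_pow_eq, MvPowerSeries.coeff_mul_monomial,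
      if_neg hne3, MvPowerSeries.coeff_monomial_same, MvPowerSeries.coeff_monomial_mul,
      if_pos le_rfl, tsub_self, one_mul, MvPowerSeries.coeff_zero_eq_constantCoeff_apply,
      hcc, hΩ, zero_add, add_zero]
  have hXm := X_mem_psMaxIdeal (k := k) 0
  have hYm := X_mem_psMaxIdeal (k := k) 1
  have hXYi : MvPowerSeries.monomial (R := k) D (1 : k) ∈ psMaxIdeal k ^ (i + 1) := by
    rw [← hmon, pow_succ']
    exact Ideal.mul_mem_mul hXm (Ideal.pow_mem_pow hYm i)
  have hYp : (MvPowerSeries.X 1 : MvPowerSeries (Fin 2) k) ^ p ∈ psMaxIdeal k ^ (i + 1) :=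
    Ideal.pow_le_pow_right (by omega) (Ideal.pow_mem_pow hYm p)
  have hvm : σ v ∈ psMaxIdeal k ^ (i + 1) := by
    rw [hσv]
    refine Ideal.add_mem _ (Ideal.add_mem _ (Ideal.mul_mem_left _ _ hYp) ?_)
      (Ideal.mul_mem_right _ _ hXYi)
    have : MvPowerSeries.monomial (R := k) D e₀ = MvPowerSeries.C (σ := Fin 2) (R := k) e₀
        * MvPowerSeries.monomial (R := k) D 1 := by
      rw [← MvPowerSeries.monomial_zero_eq_C_apply, MvPowerSeries.monomial_mul_monomial,
        zero_add, mul_one]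
    rw [this]
    exact Ideal.mul_mem_left _ _ hXYi
  have hum : σ u ∈ psMaxIdeal k ^ (i + 1) := by
    rw [hσu]
    exact Ideal.mul_mem_right _ _ (Ideal.mul_mem_right _ _
      (Ideal.pow_le_pow_right (by omega) (Ideal.pow_mem_pow hXm p)))
  have hXnv : ¬ ((MvPowerSeries.X 0 : MvPowerSeries (Fin 2) k) ∣ σ v) := by
    rw [MvPowerSeries.X_dvd_iff]
    push_neg
    exact ⟨Finsupp.single 1 p, by simp, by rw [hc1]; exact hTu⟩
  have key : ∀ w : MvPowerSeries (Fin 2) k,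
      w ∣ σ u → w ∣ σ v → w ∈ psMaxIdeal k ^ (i + 1) → False := by
    intro w hwu hwv hwm
    have hXw : ¬ ((MvPowerSeries.X 0 : MvPowerSeries (Fin 2) k) ∣ w) :=
      fun h => hXnv (h.trans hwv)
    have hwXY : w ∣ (MvPowerSeries.X 0 : MvPowerSeries (Fin 2) k) ^ p
        * (MvPowerSeries.X 1) ^ (i * p) := by
      rw [hσu] at hwu
      exact (IsUnit.dvd_mul_right hEu).mp hwu
    obtain ⟨t, ht⟩ := hwXY
    have hXpt : (MvPowerSeries.X 0 : MvPowerSeries (Fin 2) k) ^ p ∣ t := by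
      refine hXprime.pow_dvd_of_dvd_mul_left p hXw ?_
      exact ⟨(MvPowerSeries.X 1) ^ (i * p), by rw [← ht]⟩
    obtain ⟨t', rfl⟩ := hXpt
    have hXne : (MvPowerSeries.X 0 : MvPowerSeries (Fin 2) k) ^ p ≠ 0 :=
      pow_ne_zero _ hXprime.ne_zero
    have hwY : w ∣ (MvPowerSeries.X 1 : MvPowerSeries (Fin 2) k) ^ (i * p) := by
      refine ⟨t', mul_left_cancel₀ hXne ?_⟩
      rw [ht]; ring
    obtain ⟨c, hcle, hassoc⟩ := (dvd_prime_pow hYprime (i * p)).mp hwY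
    have hYcv : (MvPowerSeries.X 1 : MvPowerSeries (Fin 2) k) ^ c ∣ σ v :=
      hassoc.symm.dvd.trans hwv
    have hci : c ≤ i := by
      by_contra hcon
      push_neg at hcon
      rw [MvPowerSeries.X_pow_dvd_iff] at hYcv
      have := hYcv D (by rw [hD1]; omega)
      rw [hc2] at this
      exact he this
    obtain ⟨η, hη⟩ := hassoc.symm
    have hcw : MvPowerSeries.coeff (R := k) (Finsupp.single 1 c) w ≠ 0 := by
      rw [← hη, MvPowerSeries.X_pow_eq, MvPowerSeries.coeff_monomial_mul, if_pos le_rfl,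
        tsub_self, one_mul]
      have hun : IsUnit (MvPowerSeries.constantCoeff (σ := Fin 2) (R := k)
          (η : MvPowerSeries (Fin 2) k)) :=
        MvPowerSeries.isUnit_constantCoeff _ η.isUnit
      simpa using hun.ne_zero
    refine hcw (coeff_eq_zero_of_mem_pow (i + 1) w hwm (Finsupp.single 1 c) ?_)
    have e1 : (Finsupp.single 1 c : Fin 2 →₀ ℕ) 0 = 0 := by simp
    have e2 : (Finsupp.single 1 c : Fin 2 →₀ ℕ) 1 = c := by simp
    omega
  refine ⟨?_, ?_, ?_⟩
  · intro hdvd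
    apply hXnv
    refine dvd_trans ?_ hdvd
    rw [hσu]
    exact ((dvd_pow_self (MvPowerSeries.X 0) (by omega : p ≠ 0)).mul_right _).mul_right _
  · intro hdvd
    exact key (σ v) hdvd dvd_rfl hvm
  · intro hpr
    obtain ⟨w, hw⟩ := hpr
    have hwu : w ∣ σ u := by
      have h1 : σ u ∈ Ideal.span {σ u, σ v} := Ideal.subset_span (Set.mem_insert _ _)
      rw [hw] at h1
      exact Ideal.mem_span_singleton.mp h1
    have hwv : w ∣ σ v := by
      have h1 : σ v ∈ Ideal.span {σ u, σ v} :=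
        Ideal.subset_span (Set.mem_insert_iff.mpr (Or.inr rfl))
      rw [hw] at h1
      exact Ideal.mem_span_singleton.mp h1
    have hwm : w ∈ psMaxIdeal k ^ (i + 1) := by
      have hle : Ideal.span {σ u, σ v} ≤ psMaxIdeal k ^ (i + 1) := by
        rw [Ideal.span_le]
        rintro x hx
        rcases hx with rfl | hx
        · exact hum
        · rw [Set.mem_singleton_iff] at hx
          rw [hx]
          exact hvm
      apply hle
      rw [hw]
      exact Ideal.subset_span rfl
    exact key w hwu hwv hwm
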